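/- arXiv:1602.05698 — 2 statements merged into one kernel-verified Lean document; each statement's English description precedes it below -/
import Mathlib

section
/- Let U ⊆ ℝ² be open and g : U → ℝ a C³ function. Define H(g) = g_xx·g_y² − 2·g_xy·g_x·g_y + g_yy·g_x² and the derivation L_u h = g_y·h_x − g_x·h_y along the vector field u = g_y·∂_x − g_x·∂_y. Then everywhere on U: L_u(H(g)) = g_xxx·g_y³ − 3·g_xxy·g_y²·g_x + 3·g_xyy·g_y·g_x² − g_yyy·g_x³. -/
open Filter Topology

/-- Partial derivative in the first variable of a function of two real variables. -/
noncomputable def px (h : ℝ → ℝ → ℝ) : ℝ → ℝ → ℝ := fun x y => deriv (fun t => h t y) x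

/-- Partial derivative in the second variable of a function of two real variables. -/
noncomputable def py (h : ℝ → ℝ → ℝ) : ℝ → ℝ → ℝ := fun x y => deriv (fun t => h x t) y

/-- `H(g) = g_xx·g_y² − 2·g_xy·g_x·g_y + g_yy·g_x²`. -/
noncomputable def Hfun (g : ℝ → ℝ → ℝ) : ℝ → ℝ → ℝ := fun x y =>
  px (px g) x y * (py g x y) ^ 2 - 2 * py (px g) x y * px g x y * py g x y
    + py (py g) x y * (px g x y) ^ 2

/-- fderiv applied to the fixed direction `(1,0)`. -/
noncomputable def pfx (F : ℝ × ℝ → ℝ) : ℝ × ℝ → ℝ := fun q => fderiv ℝ F q (1, 0)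

/-- fderiv applied to the fixed direction `(0,1)`. -/
noncomputable def pfy (F : ℝ × ℝ → ℝ) : ℝ × ℝ → ℝ := fun q => fderiv ℝ F q (0, 1)

lemma pfx_contDiffOn {U : Set (ℝ × ℝ)} (hU : IsOpen U) {F : ℝ × ℝ → ℝ} {n m : WithTop ℕ∞}
    (hF : ContDiffOn ℝ n F U) (h : m + 1 ≤ n) : ContDiffOn ℝ m (pfx F) U :=
  (hF.fderiv_of_isOpen hU h).clm_apply contDiffOn_const

lemma pfy_contDiffOn {U : Set (ℝ × ℝ)} (hU : IsOpen U) {F : ℝ × ℝ → ℝ} {n m : WithTop ℕ∞}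
    (hF : ContDiffOn ℝ n F U) (h : m + 1 ≤ n) : ContDiffOn ℝ m (pfy F) U :=
  (hF.fderiv_of_isOpen hU h).clm_apply contDiffOn_const

lemma diffAt {U : Set (ℝ × ℝ)} (hU : IsOpen U) {F : ℝ × ℝ → ℝ} {n : WithTop ℕ∞}
    (hF : ContDiffOn ℝ n F U) (hn : 1 ≤ n) {p : ℝ × ℝ} (hp : p ∈ U) :
    DifferentiableAt ℝ F p :=
  ((hF.differentiableOn (zero_lt_one.trans_le hn).ne').differentiableAt (hU.mem_nhds hp))

lemma sliceX (F : ℝ × ℝ → ℝ) (p : ℝ × ℝ) (hF : DifferentiableAt ℝ F p) :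
    HasDerivAt (fun t => F (t, p.2)) (pfx F p) p.1 := by
  have h1 : HasDerivAt (fun t : ℝ => (t, p.2)) ((1 : ℝ), (0 : ℝ)) p.1 :=
    HasDerivAt.prodMk (hasDerivAt_id p.1) (hasDerivAt_const p.1 p.2)
  exact hF.hasFDerivAt.comp_hasDerivAt_of_eq p.1 h1 rfl

lemma sliceY (F : ℝ × ℝ → ℝ) (p : ℝ × ℝ) (hF : DifferentiableAt ℝ F p) :
    HasDerivAt (fun t => F (p.1, t)) (pfy F p) p.2 := by
  have h1 : HasDerivAt (fun t : ℝ => (p.1, t)) ((0 : ℝ), (1 : ℝ)) p.2 :=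
    HasDerivAt.prodMk (hasDerivAt_const p.2 p.1) (hasDerivAt_id p.2)
  exact hF.hasFDerivAt.comp_hasDerivAt_of_eq p.2 h1 rfl

lemma px_eq {U : Set (ℝ × ℝ)} (hU : IsOpen U) {h : ℝ → ℝ → ℝ} {F : ℝ × ℝ → ℝ} {p : ℝ × ℝ}
    {D : ℝ} (heq : ∀ q ∈ U, h q.1 q.2 = F q) (hp : p ∈ U)
    (hD : HasDerivAt (fun t => F (t, p.2)) D p.1) : px h p.1 p.2 = D := by
  have hmem : ∀ᶠ t in 𝓝 p.1, (t, p.2) ∈ U :=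
    ((continuous_id.prodMk continuous_const).continuousAt).preimage_mem_nhds (hU.mem_nhds hp)
  have hev : (fun t => h t p.2) =ᶠ[𝓝 p.1] fun t => F (t, p.2) :=
    hmem.mono fun t ht => heq (t, p.2) ht
  show deriv (fun t => h t p.2) p.1 = D
  rw [hev.deriv_eq]
  exact hD.deriv

lemma py_eq {U : Set (ℝ × ℝ)} (hU : IsOpen U) {h : ℝ → ℝ → ℝ} {F : ℝ × ℝ → ℝ} {p : ℝ × ℝ}
    {D : ℝ} (heq : ∀ q ∈ U, h q.1 q.2 = F q) (hp : p ∈ U)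
    (hD : HasDerivAt (fun t => F (p.1, t)) D p.2) : py h p.1 p.2 = D := by
  have hmem : ∀ᶠ t in 𝓝 p.2, (p.1, t) ∈ U :=
    ((continuous_const.prodMk continuous_id).continuousAt).preimage_mem_nhds (hU.mem_nhds hp)
  have hev : (fun t => h p.1 t) =ᶠ[𝓝 p.2] fun t => F (p.1, t) :=
    hmem.mono fun t ht => heq (p.1, t) ht
  show deriv (fun t => h p.1 t) p.2 = D
  rw [hev.deriv_eq]
  exact hD.deriv

lemma px_eqOn {U : Set (ℝ × ℝ)} (hU : IsOpen U) {h : ℝ → ℝ → ℝ} {F : ℝ × ℝ → ℝ} {p : ℝ × ℝ}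
    (heq : ∀ q ∈ U, h q.1 q.2 = F q) (hp : p ∈ U) (hF : DifferentiableAt ℝ F p) :
    px h p.1 p.2 = pfx F p :=
  px_eq hU heq hp (sliceX F p hF)

lemma py_eqOn {U : Set (ℝ × ℝ)} (hU : IsOpen U) {h : ℝ → ℝ → ℝ} {F : ℝ × ℝ → ℝ} {p : ℝ × ℝ}
    (heq : ∀ q ∈ U, h q.1 q.2 = F q) (hp : p ∈ U) (hF : DifferentiableAt ℝ F p) :
    py h p.1 p.2 = pfy F p :=
  py_eq hU heq hp (sliceY F p hF)

lemma fderiv_eval (F : ℝ × ℝ → ℝ) (p v w : ℝ × ℝ) (hdF : DifferentiableAt ℝ (fderiv ℝ F) p) :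
    fderiv ℝ (fun q => fderiv ℝ F q v) p w = fderiv ℝ (fderiv ℝ F) p w v := by
  have h : HasFDerivAt (fun q => fderiv ℝ F q v)
      ((ContinuousLinearMap.apply ℝ ℝ v).comp (fderiv ℝ (fderiv ℝ F) p)) p :=
    (ContinuousLinearMap.apply ℝ ℝ v).hasFDerivAt.comp p hdF.hasFDerivAt
  rw [h.fderiv]
  rfl

lemma swap2 {U : Set (ℝ × ℝ)} (hU : IsOpen U) {F : ℝ × ℝ → ℝ} (hF : ContDiffOn ℝ 2 F U)
    {p : ℝ × ℝ} (hp : p ∈ U) (v w : ℝ × ℝ) :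
    fderiv ℝ (fun q => fderiv ℝ F q v) p w = fderiv ℝ (fun q => fderiv ℝ F q w) p v := by
  have hFat : ContDiffAt ℝ 2 F p := hF.contDiffAt (hU.mem_nhds hp)
  have hdF : DifferentiableAt ℝ (fderiv ℝ F) p :=
    (hFat.fderiv_right (by norm_num : (1 : WithTop ℕ∞) + 1 ≤ 2)).differentiableAt one_ne_zero
  have hsym := hFat.isSymmSndFDerivAt (by simp)
  rw [fderiv_eval F p v w hdF, fderiv_eval F p w v hdF]
  exact hsym.eq w v

/-- for a `C³` function `g` on an open set `U ⊆ ℝ²`, the derivative of `H(g)`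
along the Hamiltonian vector field `u = g_y·∂_x − g_x·∂_y` equals
`g_xxx·g_y³ − 3·g_xxy·g_y²·g_x + 3·g_xyy·g_y·g_x² − g_yyy·g_x³` everywhere on `U`. -/
theorem stmt7 (U : Set (ℝ × ℝ)) (hU : IsOpen U) (g : ℝ → ℝ → ℝ)
    (hg : ContDiffOn ℝ 3 (fun q : ℝ × ℝ => g q.1 q.2) U) :
    ∀ x y : ℝ, (x, y) ∈ U →
      py g x y * px (Hfun g) x y - px g x y * py (Hfun g) x y
        = px (px (px g)) x y * (py g x y) ^ 3
          - 3 * py (px (px g)) x y * (py g x y) ^ 2 * px g x y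
          + 3 * py (py (px g)) x y * py g x y * (px g x y) ^ 2
          - py (py (py g)) x y * (px g x y) ^ 3 := by
  intro x y hxy
  set f : ℝ × ℝ → ℝ := fun q => g q.1 q.2 with hfdef
  have hf3 : ContDiffOn ℝ 3 f U := hg
  have hF1 : ContDiffOn ℝ 2 (pfx f) U := pfx_contDiffOn hU hf3 (by norm_num)
  have hF2 : ContDiffOn ℝ 2 (pfy f) U := pfy_contDiffOn hU hf3 (by norm_num)
  have hF11 : ContDiffOn ℝ 1 (pfx (pfx f)) U := pfx_contDiffOn hU hF1 (by norm_num)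
  have hF12 : ContDiffOn ℝ 1 (pfy (pfx f)) U := pfy_contDiffOn hU hF1 (by norm_num)
  have hF21 : ContDiffOn ℝ 1 (pfx (pfy f)) U := pfx_contDiffOn hU hF2 (by norm_num)
  have hF22 : ContDiffOn ℝ 1 (pfy (pfy f)) U := pfy_contDiffOn hU hF2 (by norm_num)
  -- first-order identifications
  have e1 : ∀ q ∈ U, px g q.1 q.2 = pfx f q := fun q hq =>
    px_eqOn hU (fun r _ => rfl) hq (diffAt hU hf3 (by norm_num) hq)
  have e2 : ∀ q ∈ U, py g q.1 q.2 = pfy f q := fun q hq =>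
    py_eqOn hU (fun r _ => rfl) hq (diffAt hU hf3 (by norm_num) hq)
  -- second-order identifications
  have e11 : ∀ q ∈ U, px (px g) q.1 q.2 = pfx (pfx f) q := fun q hq =>
    px_eqOn hU e1 hq (diffAt hU hF1 one_le_two hq)
  have e12 : ∀ q ∈ U, py (px g) q.1 q.2 = pfy (pfx f) q := fun q hq =>
    py_eqOn hU e1 hq (diffAt hU hF1 one_le_two hq)
  have e22 : ∀ q ∈ U, py (py g) q.1 q.2 = pfy (pfy f) q := fun q hq =>
    py_eqOn hU e2 hq (diffAt hU hF2 one_le_two hq)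
  -- Clairaut at second order, everywhere on U
  have mixed : ∀ q ∈ U, pfx (pfy f) q = pfy (pfx f) q := by
    intro q hq
    have hFat : ContDiffAt ℝ 3 f q := hf3.contDiffAt (hU.mem_nhds hq)
    have hdf : DifferentiableAt ℝ (fderiv ℝ f) q :=
      (hFat.fderiv_right (by norm_num : (1 : WithTop ℕ∞) + 1 ≤ 3)).differentiableAt one_ne_zero
    have hsym := hFat.isSymmSndFDerivAt (by norm_num)
    show fderiv ℝ (fun r => fderiv ℝ f r (0, 1)) q (1, 0)
        = fderiv ℝ (fun r => fderiv ℝ f r (1, 0)) q (0, 1)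
    rw [fderiv_eval f q (0, 1) (1, 0) hdf, fderiv_eval f q (1, 0) (0, 1) hdf]
    exact hsym.eq _ _
  -- Hfun identification on U
  have HfunEq : ∀ q ∈ U, Hfun g q.1 q.2
      = pfx (pfx f) q * (pfy f q) ^ 2 - 2 * pfy (pfx f) q * pfx f q * pfy f q
        + pfy (pfy f) q * (pfx f q) ^ 2 := by
    intro q hq
    simp only [Hfun]
    rw [e11 q hq, e12 q hq, e1 q hq, e2 q hq, e22 q hq]
  -- slice derivatives at the point p = (x, y)
  have hx1 : HasDerivAt (fun t => pfx f (t, y)) (pfx (pfx f) (x, y)) x :=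
    sliceX (pfx f) (x, y) (diffAt hU hF1 one_le_two hxy)
  have hx2 : HasDerivAt (fun t => pfy f (t, y)) (pfx (pfy f) (x, y)) x :=
    sliceX (pfy f) (x, y) (diffAt hU hF2 one_le_two hxy)
  have hx11 : HasDerivAt (fun t => pfx (pfx f) (t, y)) (pfx (pfx (pfx f)) (x, y)) x :=
    sliceX (pfx (pfx f)) (x, y) (diffAt hU hF11 le_rfl hxy)
  have hx12 : HasDerivAt (fun t => pfy (pfx f) (t, y)) (pfx (pfy (pfx f)) (x, y)) x :=
    sliceX (pfy (pfx f)) (x, y) (diffAt hU hF12 le_rfl hxy)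
  have hx22 : HasDerivAt (fun t => pfy (pfy f) (t, y)) (pfx (pfy (pfy f)) (x, y)) x :=
    sliceX (pfy (pfy f)) (x, y) (diffAt hU hF22 le_rfl hxy)
  have hy1 : HasDerivAt (fun t => pfx f (x, t)) (pfy (pfx f) (x, y)) y :=
    sliceY (pfx f) (x, y) (diffAt hU hF1 one_le_two hxy)
  have hy2 : HasDerivAt (fun t => pfy f (x, t)) (pfy (pfy f) (x, y)) y :=
    sliceY (pfy f) (x, y) (diffAt hU hF2 one_le_two hxy)
  have hy11 : HasDerivAt (fun t => pfx (pfx f) (x, t)) (pfy (pfx (pfx f)) (x, y)) y :=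
    sliceY (pfx (pfx f)) (x, y) (diffAt hU hF11 le_rfl hxy)
  have hy12 : HasDerivAt (fun t => pfy (pfx f) (x, t)) (pfy (pfy (pfx f)) (x, y)) y :=
    sliceY (pfy (pfx f)) (x, y) (diffAt hU hF12 le_rfl hxy)
  have hy22 : HasDerivAt (fun t => pfy (pfy f) (x, t)) (pfy (pfy (pfy f)) (x, y)) y :=
    sliceY (pfy (pfy f)) (x, y) (diffAt hU hF22 le_rfl hxy)
  -- derivatives of Hfun
  have hΦx := ((hx11.mul (hx2.pow 2)).sub
      (((hx12.const_mul (2 : ℝ)).mul hx1).mul hx2)).add (hx22.mul (hx1.pow 2))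
  have hΦy := ((hy11.mul (hy2.pow 2)).sub
      (((hy12.const_mul (2 : ℝ)).mul hy1).mul hy2)).add (hy22.mul (hy1.pow 2))
  have hpxH : px (Hfun g) x y = _ :=
    px_eq (F := fun q => pfx (pfx f) q * (pfy f q) ^ 2
        - 2 * pfy (pfx f) q * pfx f q * pfy f q + pfy (pfy f) q * (pfx f q) ^ 2)
      hU HfunEq hxy hΦx
  have hpyH : py (Hfun g) x y = _ :=
    py_eq (F := fun q => pfx (pfx f) q * (pfy f q) ^ 2
        - 2 * pfy (pfx f) q * pfx f q * pfy f q + pfy (pfy f) q * (pfx f q) ^ 2)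
      hU HfunEq hxy hΦy
  -- third-order identifications at the point
  have e111 : px (px (px g)) x y = pfx (pfx (pfx f)) (x, y) :=
    px_eqOn hU e11 hxy (diffAt hU hF11 le_rfl hxy)
  have e112 : py (px (px g)) x y = pfy (pfx (pfx f)) (x, y) :=
    py_eqOn hU e11 hxy (diffAt hU hF11 le_rfl hxy)
  have e122 : py (py (px g)) x y = pfy (pfy (pfx f)) (x, y) :=
    py_eqOn hU e12 hxy (diffAt hU hF12 le_rfl hxy)
  have e222 : py (py (py g)) x y = pfy (pfy (pfy f)) (x, y) :=
    py_eqOn hU e22 hxy (diffAt hU hF22 le_rfl hxy)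
  -- symmetry relations among the derivative values at (x, y)
  have r1 : pfx (pfy f) (x, y) = pfy (pfx f) (x, y) := mixed (x, y) hxy
  have r2 : pfx (pfy (pfx f)) (x, y) = pfy (pfx (pfx f)) (x, y) :=
    swap2 hU hF1 hxy (0, 1) (1, 0)
  have r3 : pfx (pfy (pfy f)) (x, y) = pfy (pfx (pfy f)) (x, y) :=
    swap2 hU hF2 hxy (0, 1) (1, 0)
  have hev : pfx (pfy f) =ᶠ[𝓝 ((x : ℝ), (y : ℝ))] pfy (pfx f) :=
    Filter.eventuallyEq_of_mem (hU.mem_nhds hxy) mixed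
  have r4 : pfy (pfx (pfy f)) (x, y) = pfy (pfy (pfx f)) (x, y) := by
    show fderiv ℝ (pfx (pfy f)) (x, y) (0, 1) = fderiv ℝ (pfy (pfx f)) (x, y) (0, 1)
    rw [hev.fderiv_eq]
  -- finish
  rw [hpxH, hpyH, e111, e112, e122, e222,
    e1 (x, y) hxy, e2 (x, y) hxy, r1, r2, r3, r4]
  push_cast
  simp only [Pi.pow_apply, Pi.mul_apply]
  ring
end

section
/- Let U ⊆ ℝ² be open, g : U → ℝ a C³ function, p ∈ ℝ, I an interval, and σ : I → U a C¹ curve such that for all t ∈ I: g(σ(t)) = 0 and ∇g(σ(t)) ≠ 0. Suppose that at every point (x,y) = σ(t): (1+x²+y²)·(g_y·∂_x(H(g)) − g_x·∂_y(H(g))) + 3·(2−p)·H(g)·(x·g_y − y·g_x) = 0, where H(g) = g_xx·g_y² − 2·g_xy·g_x·g_y + g_yy·g_x². Then the function t ↦ H(g)(σ(t))·(1+σ₁(t)²+σ₂(t)²)^{(6−3p)/2} is constant on I; equivalently, there is a constant c with H(g)(σ(t)) = c·(1+σ₁(t)²+σ₂(t)²)^{(3p−6)/2} for all t ∈ I.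 -/
/-! ### Auxiliary machinery -/

/-- Uncurried version of a function of two variables. -/
noncomputable def unc (g : ℝ → ℝ → ℝ) : ℝ × ℝ → ℝ := fun q => g q.1 q.2

/-- First partial derivative via `fderiv`. -/
noncomputable def Px (f : ℝ × ℝ → ℝ) : ℝ × ℝ → ℝ := fun q => fderiv ℝ f q (1, 0)

/-- Second partial derivative via `fderiv`. -/
noncomputable def Py (f : ℝ × ℝ → ℝ) : ℝ × ℝ → ℝ := fun q => fderiv ℝ f q (0, 1)

lemma contDiffOn_Px {U : Set (ℝ × ℝ)} {f : ℝ × ℝ → ℝ} {n m : WithTop ℕ∞}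
    (hf : ContDiffOn ℝ n f U) (hU : IsOpen U) (h : m + 1 ≤ n) :
    ContDiffOn ℝ m (Px f) U :=
  (hf.fderiv_of_isOpen hU h).clm_apply contDiffOn_const

lemma contDiffOn_Py {U : Set (ℝ × ℝ)} {f : ℝ × ℝ → ℝ} {n m : WithTop ℕ∞}
    (hf : ContDiffOn ℝ n f U) (hU : IsOpen U) (h : m + 1 ≤ n) :
    ContDiffOn ℝ m (Py f) U :=
  (hf.fderiv_of_isOpen hU h).clm_apply contDiffOn_const

/-- `Hfun` written in terms of `fderiv`-partials. -/
noncomputable def Hc (g : ℝ → ℝ → ℝ) : ℝ × ℝ → ℝ := fun q =>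
  Px (Px (unc g)) q * (Py (unc g) q) ^ 2
    - 2 * Py (Px (unc g)) q * Px (unc g) q * Py (unc g) q
    + Py (Py (unc g)) q * (Px (unc g) q) ^ 2

lemma clm_decomp (L : ℝ × ℝ →L[ℝ] ℝ) (v : ℝ × ℝ) :
    L v = v.1 * L (1, 0) + v.2 * L (0, 1) := by
  calc L v = L (v.1 • ((1:ℝ), (0:ℝ)) + v.2 • ((0:ℝ), (1:ℝ))) := by
        congr 1; simp [Prod.ext_iff]
    _ = v.1 * L (1, 0) + v.2 * L (0, 1) := by
        rw [map_add, map_smul, map_smul]; simp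

lemma px_eq_s9 {g : ℝ → ℝ → ℝ} {x y : ℝ} (h : DifferentiableAt ℝ (unc g) (x, y)) :
    px g x y = fderiv ℝ (unc g) (x, y) (1, 0) := by
  have h1 : HasDerivAt (fun t : ℝ => (t, y)) ((1:ℝ), (0:ℝ)) x :=
    (hasDerivAt_id x).prodMk (hasDerivAt_const x y)
  exact (h.hasFDerivAt.comp_hasDerivAt x h1).deriv

lemma py_eq_s9 {g : ℝ → ℝ → ℝ} {x y : ℝ} (h : DifferentiableAt ℝ (unc g) (x, y)) :
    py g x y = fderiv ℝ (unc g) (x, y) (0, 1) := by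
  have h1 : HasDerivAt (fun t : ℝ => (x, t)) ((0:ℝ), (1:ℝ)) y :=
    (hasDerivAt_const y x).prodMk (hasDerivAt_id y)
  exact (h.hasFDerivAt.comp_hasDerivAt y h1).deriv

lemma px_congr {g₁ g₂ : ℝ → ℝ → ℝ} {x y : ℝ} (h : unc g₁ =ᶠ[nhds (x, y)] unc g₂) :
    px g₁ x y = px g₂ x y := by
  have hc : ContinuousAt (fun t : ℝ => (t, y)) x := by fun_prop
  exact Filter.EventuallyEq.deriv_eq (hc.eventually h)

lemma py_congr {g₁ g₂ : ℝ → ℝ → ℝ} {x y : ℝ} (h : unc g₁ =ᶠ[nhds (x, y)] unc g₂) :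
    py g₁ x y = py g₂ x y := by
  have hc : ContinuousAt (fun t : ℝ => (x, t)) y := by fun_prop
  exact Filter.EventuallyEq.deriv_eq (hc.eventually h)

lemma px_of_eventually {f : ℝ × ℝ → ℝ} {g : ℝ → ℝ → ℝ} {x y : ℝ}
    (h : ∀ᶠ q : ℝ × ℝ in nhds (x, y), g q.1 q.2 = f q)
    (hf : DifferentiableAt ℝ f (x, y)) :
    px g x y = Px f (x, y) :=
  (px_congr (g₂ := fun a b => f (a, b)) h).trans (px_eq_s9 hf)

lemma py_of_eventually {f : ℝ × ℝ → ℝ} {g : ℝ → ℝ → ℝ} {x y : ℝ}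
    (h : ∀ᶠ q : ℝ × ℝ in nhds (x, y), g q.1 q.2 = f q)
    (hf : DifferentiableAt ℝ f (x, y)) :
    py g x y = Py f (x, y) :=
  (py_congr (g₂ := fun a b => f (a, b)) h).trans (py_eq_s9 hf)

/-- spherical case: if along a `C¹` curve `σ` in the zero set of `g` (with
nonvanishing gradient) the identity
`(1+x²+y²)·L_u(H(g)) + 3(2−p)·H(g)·(x·g_y − y·g_x) = 0` holds, then
`H(g) = c·(1+x²+y²)^{(3p−6)/2}` along `σ` for some constant `c`. -/
theorem stmt9 (U : Set (ℝ × ℝ)) (hU : IsOpen U) (g : ℝ → ℝ → ℝ)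
    (hg : ContDiffOn ℝ 3 (fun q : ℝ × ℝ => g q.1 q.2) U)
    (p : ℝ) (I : Set ℝ) (hI : Convex ℝ I)
    (σ : ℝ → ℝ × ℝ) (hσ : ContDiffOn ℝ 1 σ I)
    (hmem : ∀ t ∈ I, σ t ∈ U)
    (hg0 : ∀ t ∈ I, g (σ t).1 (σ t).2 = 0)
    (hgrad : ∀ t ∈ I, (px g (σ t).1 (σ t).2, py g (σ t).1 (σ t).2) ≠ (0, 0))
    (hpde : ∀ t ∈ I,
      (1 + (σ t).1 ^ 2 + (σ t).2 ^ 2) *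
          (py g (σ t).1 (σ t).2 * px (Hfun g) (σ t).1 (σ t).2
            - px g (σ t).1 (σ t).2 * py (Hfun g) (σ t).1 (σ t).2)
        + 3 * (2 - p) * Hfun g (σ t).1 (σ t).2 *
            ((σ t).1 * py g (σ t).1 (σ t).2 - (σ t).2 * px g (σ t).1 (σ t).2) = 0) :
    (∃ c : ℝ, ∀ t ∈ I,
        Hfun g (σ t).1 (σ t).2 * (1 + (σ t).1 ^ 2 + (σ t).2 ^ 2) ^ ((6 - 3 * p) / 2) = c) ∧
    (∃ c : ℝ, ∀ t ∈ I,
        Hfun g (σ t).1 (σ t).2 = c * (1 + (σ t).1 ^ 2 + (σ t).2 ^ 2) ^ ((3 * p - 6) / 2)) := by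
  -- smoothness facts
  have hg' : ContDiffOn ℝ 3 (unc g) U := hg
  have h1 : ContDiffOn ℝ 2 (Px (unc g)) U := contDiffOn_Px hg' hU (by norm_num)
  have h2 : ContDiffOn ℝ 2 (Py (unc g)) U := contDiffOn_Py hg' hU (by norm_num)
  have h11 : ContDiffOn ℝ 1 (Px (Px (unc g))) U := contDiffOn_Px h1 hU (by norm_num)
  have h12 : ContDiffOn ℝ 1 (Py (Px (unc g))) U := contDiffOn_Py h1 hU (by norm_num)
  have h22 : ContDiffOn ℝ 1 (Py (Py (unc g))) U := contDiffOn_Py h2 hU (by norm_num)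
  have hHc : ContDiffOn ℝ 1 (Hc g) U :=
    ((h11.mul ((h2.of_le (by norm_num)).pow 2)).sub
        (((contDiffOn_const.mul h12).mul (h1.of_le (by norm_num))).mul
          (h2.of_le (by norm_num)))).add
      (h22.mul ((h1.of_le (by norm_num)).pow 2))
  have hdiffG : ∀ q ∈ U, DifferentiableAt ℝ (unc g) q := fun q hq =>
    (hg'.contDiffAt (hU.mem_nhds hq)).differentiableAt (by norm_num)
  have hdiffPx : ∀ q ∈ U, DifferentiableAt ℝ (Px (unc g)) q := fun q hq =>
    (h1.contDiffAt (hU.mem_nhds hq)).differentiableAt (by norm_num)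
  have hdiffPy : ∀ q ∈ U, DifferentiableAt ℝ (Py (unc g)) q := fun q hq =>
    (h2.contDiffAt (hU.mem_nhds hq)).differentiableAt (by norm_num)
  have hdiffHc : ∀ q ∈ U, DifferentiableAt ℝ (Hc g) q := fun q hq =>
    (hHc.contDiffAt (hU.mem_nhds hq)).differentiableAt (by norm_num)
  -- pointwise identities on U
  have hpx : ∀ q ∈ U, px g q.1 q.2 = Px (unc g) q := by
    rintro ⟨x, y⟩ hq; exact px_eq_s9 (hdiffG _ hq)
  have hpy : ∀ q ∈ U, py g q.1 q.2 = Py (unc g) q := by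
    rintro ⟨x, y⟩ hq; exact py_eq_s9 (hdiffG _ hq)
  have hpxx : ∀ q ∈ U, px (px g) q.1 q.2 = Px (Px (unc g)) q := by
    rintro ⟨x, y⟩ hq
    exact px_of_eventually ((hU.eventually_mem hq).mono fun r hr => hpx r hr) (hdiffPx _ hq)
  have hpxy : ∀ q ∈ U, py (px g) q.1 q.2 = Py (Px (unc g)) q := by
    rintro ⟨x, y⟩ hq
    exact py_of_eventually ((hU.eventually_mem hq).mono fun r hr => hpx r hr) (hdiffPx _ hq)
  have hpyy : ∀ q ∈ U, py (py g) q.1 q.2 = Py (Py (unc g)) q := by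
    rintro ⟨x, y⟩ hq
    exact py_of_eventually ((hU.eventually_mem hq).mono fun r hr => hpy r hr) (hdiffPy _ hq)
  have hH : ∀ q ∈ U, Hfun g q.1 q.2 = Hc g q := by
    intro q hq
    simp only [Hfun, Hc, hpxx q hq, hpxy q hq, hpyy q hq, hpx q hq, hpy q hq]
  have hpxH : ∀ q ∈ U, px (Hfun g) q.1 q.2 = Px (Hc g) q := by
    rintro ⟨x, y⟩ hq
    exact px_of_eventually ((hU.eventually_mem hq).mono fun r hr => hH r hr) (hdiffHc _ hq)
  have hpyH : ∀ q ∈ U, py (Hfun g) q.1 q.2 = Py (Hc g) q := by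
    rintro ⟨x, y⟩ hq
    exact py_of_eventually ((hU.eventually_mem hq).mono fun r hr => hH r hr) (hdiffHc _ hq)
  -- key constancy claim
  have key : ∃ c : ℝ, ∀ t ∈ I,
      Hfun g (σ t).1 (σ t).2 * (1 + (σ t).1 ^ 2 + (σ t).2 ^ 2) ^ ((6 - 3 * p) / 2) = c := by
    by_cases hsub : I.Subsingleton
    · rcases Set.eq_empty_or_nonempty I with hIe | ⟨t₀, ht₀⟩
      · exact ⟨0, fun t ht => absurd ht (by simp [hIe])⟩
      · exact ⟨_, fun t ht => by rw [hsub ht ht₀]⟩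
    · obtain ⟨a, ha, b, hb, hab⟩ := Set.not_subsingleton_iff.mp hsub
      have hne : (interior I).Nonempty := by
        rcases lt_or_gt_of_ne hab with h | h
        · exact ⟨(a + b) / 2, interior_mono (hI.ordConnected.out ha hb)
            (by rw [interior_Icc]; exact Set.mem_Ioo.mpr ⟨by linarith, by linarith⟩)⟩
        · exact ⟨(b + a) / 2, interior_mono (hI.ordConnected.out hb ha)
            (by rw [interior_Icc]; exact Set.mem_Ioo.mpr ⟨by linarith, by linarith⟩)⟩
      set F : ℝ → ℝ := fun t =>
        Hfun g (σ t).1 (σ t).2 * (1 + (σ t).1 ^ 2 + (σ t).2 ^ 2) ^ ((6 - 3 * p) / 2) with hFdef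
      have main : ∀ t ∈ I, HasDerivWithinAt F 0 I t := by
        intro t ht
        have haU : σ t ∈ U := hmem t ht
        have hWpos : (0:ℝ) < 1 + (σ t).1 ^ 2 + (σ t).2 ^ 2 := by positivity
        have hv : HasDerivWithinAt σ (derivWithin σ I t) I t :=
          ((hσ t ht).differentiableWithinAt (by norm_num)).hasDerivWithinAt
        set v := derivWithin σ I t with hvdef
        have hud : UniqueDiffWithinAt ℝ I t :=
          uniqueDiffWithinAt_convex hI hne (subset_closure ht)
        have hcomp : HasDerivWithinAt (fun s => unc g (σ s)) (fderiv ℝ (unc g) (σ t) v) I t :=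
          (hdiffG _ haU).hasFDerivAt.comp_hasDerivWithinAt t hv
        have hzero : HasDerivWithinAt (fun s => unc g (σ s)) 0 I t :=
          (hasDerivWithinAt_const t I (0:ℝ)).congr (fun s hs => hg0 s hs) (hg0 t ht)
        have horto0 : fderiv ℝ (unc g) (σ t) v = 0 := by
          rw [← hcomp.derivWithin hud, hzero.derivWithin hud]
        have horto : v.1 * Px (unc g) (σ t) + v.2 * Py (unc g) (σ t) = 0 := by
          rw [show Px (unc g) (σ t) = fderiv ℝ (unc g) (σ t) (1, 0) from rfl,
            show Py (unc g) (σ t) = fderiv ℝ (unc g) (σ t) (0, 1) from rfl, ← clm_decomp]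
          exact horto0
        have hgrad' : Px (unc g) (σ t) ^ 2 + Py (unc g) (σ t) ^ 2 ≠ 0 := by
          have h := hgrad t ht
          rw [hpx _ haU, hpy _ haU] at h
          intro hc
          apply h
          have h1 : Px (unc g) (σ t) = 0 := by
            nlinarith [sq_nonneg (Px (unc g) (σ t)), sq_nonneg (Py (unc g) (σ t))]
          have h2 : Py (unc g) (σ t) = 0 := by
            nlinarith [sq_nonneg (Px (unc g) (σ t)), sq_nonneg (Py (unc g) (σ t))]
          rw [h1, h2]
        -- derivative of the H-part
        have hHσ : HasDerivWithinAt (fun s => Hfun g (σ s).1 (σ s).2)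
            (v.1 * Px (Hc g) (σ t) + v.2 * Py (Hc g) (σ t)) I t := by
          have hHσ0 : HasDerivWithinAt (fun s => Hc g (σ s)) (fderiv ℝ (Hc g) (σ t) v) I t :=
            (hdiffHc _ haU).hasFDerivAt.comp_hasDerivWithinAt t hv
          have heq : fderiv ℝ (Hc g) (σ t) v
              = v.1 * Px (Hc g) (σ t) + v.2 * Py (Hc g) (σ t) :=
            clm_decomp _ v
          exact (heq ▸ hHσ0).congr (fun s hs => hH (σ s) (hmem s hs)) (hH (σ t) haU)
        -- derivative of the weight part
        have hσ1 : HasDerivWithinAt (fun s => (σ s).1) v.1 I t :=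
          by have := (hasFDerivAt_fst (p := σ t)).comp_hasDerivWithinAt t hv; exact this
        have hσ2 : HasDerivWithinAt (fun s => (σ s).2) v.2 I t :=
          by have := (hasFDerivAt_snd (p := σ t)).comp_hasDerivWithinAt t hv; exact this
        have hWσ : HasDerivWithinAt (fun s => 1 + (σ s).1 ^ 2 + (σ s).2 ^ 2)
            (2 * (σ t).1 * v.1 + 2 * (σ t).2 * v.2) I t := by
          have h := ((hasDerivWithinAt_const t I (1:ℝ)).fun_add (hσ1.fun_pow 2)).fun_add (hσ2.fun_pow 2)
          refine h.congr_deriv ?_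
          push_cast
          ring
        have hWA : HasDerivWithinAt
            (fun s => (1 + (σ s).1 ^ 2 + (σ s).2 ^ 2) ^ ((6 - 3 * p) / 2))
            ((2 * (σ t).1 * v.1 + 2 * (σ t).2 * v.2) * ((6 - 3 * p) / 2)
              * (1 + (σ t).1 ^ 2 + (σ t).2 ^ 2) ^ ((6 - 3 * p) / 2 - 1)) I t :=
          hWσ.rpow_const (Or.inl (ne_of_gt hWpos))
        have hF : HasDerivWithinAt F
            ((v.1 * Px (Hc g) (σ t) + v.2 * Py (Hc g) (σ t))
                * (1 + (σ t).1 ^ 2 + (σ t).2 ^ 2) ^ ((6 - 3 * p) / 2)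
              + Hfun g (σ t).1 (σ t).2 *
                ((2 * (σ t).1 * v.1 + 2 * (σ t).2 * v.2) * ((6 - 3 * p) / 2)
                  * (1 + (σ t).1 ^ 2 + (σ t).2 ^ 2) ^ ((6 - 3 * p) / 2 - 1))) I t :=
          hHσ.mul hWA
        -- the derivative vanishes
        have hpde' : (1 + (σ t).1 ^ 2 + (σ t).2 ^ 2) *
              (Py (unc g) (σ t) * Px (Hc g) (σ t) - Px (unc g) (σ t) * Py (Hc g) (σ t))
            + 3 * (2 - p) * Hc g (σ t) *
              ((σ t).1 * Py (unc g) (σ t) - (σ t).2 * Px (unc g) (σ t)) = 0 := by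
          have h := hpde t ht
          rwa [hpx _ haU, hpy _ haU, hpxH _ haU, hpyH _ haU, hH _ haU] at h
        have hW1 : (1 + (σ t).1 ^ 2 + (σ t).2 ^ 2) ^ ((6 - 3 * p) / 2)
            = (1 + (σ t).1 ^ 2 + (σ t).2 ^ 2) ^ ((6 - 3 * p) / 2 - 1)
              * (1 + (σ t).1 ^ 2 + (σ t).2 ^ 2) := by
          nth_rewrite 1 [show (6 - 3 * p) / 2 = ((6 - 3 * p) / 2 - 1) + 1 by ring]
          rw [Real.rpow_add hWpos, Real.rpow_one]
        have hv1 : v.1 * (Px (unc g) (σ t) ^ 2 + Py (unc g) (σ t) ^ 2)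
            = (v.1 * Py (unc g) (σ t) - v.2 * Px (unc g) (σ t)) * Py (unc g) (σ t) := by
          linear_combination Px (unc g) (σ t) * horto
        have hv2 : v.2 * (Px (unc g) (σ t) ^ 2 + Py (unc g) (σ t) ^ 2)
            = -((v.1 * Py (unc g) (σ t) - v.2 * Px (unc g) (σ t)) * Px (unc g) (σ t)) := by
          linear_combination Py (unc g) (σ t) * horto
        have hD0 : (v.1 * Px (Hc g) (σ t) + v.2 * Py (Hc g) (σ t))
                * (1 + (σ t).1 ^ 2 + (σ t).2 ^ 2) ^ ((6 - 3 * p) / 2)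
              + Hfun g (σ t).1 (σ t).2 *
                ((2 * (σ t).1 * v.1 + 2 * (σ t).2 * v.2) * ((6 - 3 * p) / 2)
                  * (1 + (σ t).1 ^ 2 + (σ t).2 ^ 2) ^ ((6 - 3 * p) / 2 - 1)) = 0 := by
          rw [hH _ haU]
          have hs : ((v.1 * Px (Hc g) (σ t) + v.2 * Py (Hc g) (σ t))
                * (1 + (σ t).1 ^ 2 + (σ t).2 ^ 2) ^ ((6 - 3 * p) / 2)
              + Hc g (σ t) *
                ((2 * (σ t).1 * v.1 + 2 * (σ t).2 * v.2) * ((6 - 3 * p) / 2)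
                  * (1 + (σ t).1 ^ 2 + (σ t).2 ^ 2) ^ ((6 - 3 * p) / 2 - 1)))
              * (Px (unc g) (σ t) ^ 2 + Py (unc g) (σ t) ^ 2) = 0 := by
            linear_combination
              (Px (Hc g) (σ t) * (1 + (σ t).1 ^ 2 + (σ t).2 ^ 2) ^ ((6 - 3 * p) / 2)
                  + Hc g (σ t) * 2 * (σ t).1 * ((6 - 3 * p) / 2)
                    * (1 + (σ t).1 ^ 2 + (σ t).2 ^ 2) ^ ((6 - 3 * p) / 2 - 1)) * hv1
              + (Py (Hc g) (σ t) * (1 + (σ t).1 ^ 2 + (σ t).2 ^ 2) ^ ((6 - 3 * p) / 2)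
                  + Hc g (σ t) * 2 * (σ t).2 * ((6 - 3 * p) / 2)
                    * (1 + (σ t).1 ^ 2 + (σ t).2 ^ 2) ^ ((6 - 3 * p) / 2 - 1)) * hv2
              + ((v.1 * Py (unc g) (σ t) - v.2 * Px (unc g) (σ t))
                  * (1 + (σ t).1 ^ 2 + (σ t).2 ^ 2) ^ ((6 - 3 * p) / 2 - 1)) * hpde'
              + ((v.1 * Py (unc g) (σ t) - v.2 * Px (unc g) (σ t))
                  * (Py (unc g) (σ t) * Px (Hc g) (σ t)
                    - Px (unc g) (σ t) * Py (Hc g) (σ t))) * hW1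
          exact (mul_eq_zero.mp hs).resolve_right hgrad'
        exact hD0 ▸ hF
      refine ⟨F a, fun t ht => ?_⟩
      have hb := Convex.norm_image_sub_le_of_norm_hasDerivWithin_le
        (C := 0) (f' := fun _ => (0:ℝ)) main (fun x hx => by simp) hI ha ht
      rw [zero_mul] at hb
      have := norm_le_zero_iff.mp hb
      have := sub_eq_zero.mp this
      exact this
  refine ⟨key, ?_⟩
  obtain ⟨c, hc⟩ := key
  refine ⟨c, fun t ht => ?_⟩
  have hWpos : (0:ℝ) < 1 + (σ t).1 ^ 2 + (σ t).2 ^ 2 := by positivity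
  have h := congrArg (· * (1 + (σ t).1 ^ 2 + (σ t).2 ^ 2) ^ ((3 * p - 6) / 2)) (hc t ht)
  rwa [mul_assoc, ← Real.rpow_add hWpos,
    show (6 - 3 * p) / 2 + (3 * p - 6) / 2 = 0 by ring, Real.rpow_zero, mul_one] at h
end
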